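/- arXiv:1508.04205 — 2 statements merged into one kernel-verified Lean document; each statement's English description precedes it below -/
import Mathlib

section
/- Let F, G, P be polynomial mappings in z = (z¹, …, zⁿ) ∈ ℂⁿ such that ‖P(z)‖² = (‖F(z)‖² − ‖G(z)‖²)·‖z‖² for all z ∈ ℂⁿ. Then V_P + V_{G⊗z} = V_{F⊗z}; in particular V_{G⊗z} ⊆ V_{F⊗z}, i.e., every product G^k(z)·zⁱ lies in the complex span of the products F^j(z)·zⁱ. -/
open scoped BigOperators

noncomputable section

open MvPolynomial Complex

def part {σ : Type*} (f : ℂ →+ ℝ) (S : MvPolynomial σ ℂ) : MvPolynomial σ ℝ :=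
  ∑ m ∈ S.support, monomial m (f (coeff m S))

lemma coeff_part {σ : Type*} (f : ℂ →+ ℝ) (S : MvPolynomial σ ℂ) (μ : σ →₀ ℕ) :
    coeff μ (part f S) = f (coeff μ S) := by
  classical
  rw [part, coeff_sum]
  simp only [coeff_monomial]
  by_cases hμ : μ ∈ S.support
  · rw [Finset.sum_eq_single μ]
    · simp
    · intro b _ hb; simp [hb]
    · intro hb; exact absurd hμ hb
  · rw [Finset.sum_eq_zero, eq_comm]
    · rw [MvPolynomial.notMem_support_iff.mp hμ, map_zero]
    · intro b hb
      have : b ≠ μ := fun h => hμ (h ▸ hb)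
      simp [this]

lemma eval_real_repr {σ : Type*} (S : MvPolynomial σ ℂ) (v : σ → ℝ) :
    eval (fun i => (v i : ℂ)) S =
      (eval v (part Complex.reAddGroupHom S) : ℝ) +
        (eval v (part Complex.imAddGroupHom S) : ℝ) * I := by
  conv_lhs => rw [S.as_sum]
  rw [show part Complex.reAddGroupHom S = ∑ m ∈ S.support, monomial m (reAddGroupHom (coeff m S)) from rfl,
     show part Complex.imAddGroupHom S = ∑ m ∈ S.support, monomial m (imAddGroupHom (coeff m S)) from rfl,
     map_sum, map_sum, map_sum]
  push_cast
  rw [Finset.sum_mul, ← Finset.sum_add_distrib]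
  apply Finset.sum_congr rfl
  intro m _
  rw [eval_monomial, eval_monomial, eval_monomial]
  have hprod : (Finsupp.prod m fun i k => ((v i : ℂ)) ^ k) =
      ((Finsupp.prod m fun i k => (v i) ^ k : ℝ) : ℂ) := by
    rw [Finsupp.prod, Finsupp.prod]
    push_cast
    rfl
  rw [hprod]
  set r : ℝ := Finsupp.prod m fun i k => (v i) ^ k
  show _ = ((reAddGroupHom (coeff m S) * r : ℝ) : ℂ) + ((imAddGroupHom (coeff m S) * r : ℝ) : ℂ) * I
  simp only [reAddGroupHom, imAddGroupHom, AddMonoidHom.coe_mk, ZeroHom.coe_mk]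
  simp [Complex.ext_iff]

lemma zero_of_eval_real {σ : Type*} (S : MvPolynomial σ ℂ)
    (h : ∀ v : σ → ℝ, eval (fun i => (v i : ℂ)) S = 0) : S = 0 := by
  have hre : part Complex.reAddGroupHom S = 0 := by
    apply MvPolynomial.funext (q := 0)
    intro v
    have := h v
    rw [eval_real_repr] at this
    have h2 := congrArg Complex.re this
    simpa using h2
  have him : part Complex.imAddGroupHom S = 0 := by
    apply MvPolynomial.funext (q := 0)
    intro v
    have := h v
    rw [eval_real_repr] at this
    have h2 := congrArg Complex.im this
    simpa using h2
  ext μ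
  have h1 : (coeff μ S).re = 0 := by
    have := congrArg (coeff μ) hre; rwa [coeff_part, coeff_zero] at this
  have h2 : (coeff μ S).im = 0 := by
    have := congrArg (coeff μ) him; rwa [coeff_part, coeff_zero] at this
  simp [Complex.ext_iff, h1, h2]

lemma eval_bind₁' {σ τ : Type*} (x : τ → ℂ) (g : σ → MvPolynomial τ ℂ) (R : MvPolynomial σ ℂ) :
    eval x (bind₁ g R) = eval (fun s => eval x (g s)) R :=
  eval₂Hom_bind₁ (RingHom.id ℂ) x g R

lemma zero_of_eval_conj_diag {σ : Type*} (R : MvPolynomial (σ ⊕ σ) ℂ)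
    (h : ∀ z : σ → ℂ, eval (Sum.elim z (fun i => (starRingEnd ℂ) (z i))) R = 0) : R = 0 := by
  set g : σ ⊕ σ → MvPolynomial (σ ⊕ σ) ℂ :=
    Sum.elim (fun j => X (Sum.inl j) + C I * X (Sum.inr j))
             (fun j => X (Sum.inl j) - C I * X (Sum.inr j)) with hg
  set g' : σ ⊕ σ → MvPolynomial (σ ⊕ σ) ℂ :=
    Sum.elim (fun j => C (1/2) * X (Sum.inl j) + C (1/2) * X (Sum.inr j))
             (fun j => C (-(I/2)) * X (Sum.inl j) + C (I/2) * X (Sum.inr j)) with hg'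
  have hS : bind₁ g R = 0 := by
    apply zero_of_eval_real
    intro v
    rw [eval_bind₁']
    have hfun : (fun s => eval (fun i => ((v i) : ℂ)) (g s))
        = Sum.elim (fun j => (v (Sum.inl j) : ℂ) + I * v (Sum.inr j))
            (fun j => (starRingEnd ℂ) ((v (Sum.inl j) : ℂ) + I * v (Sum.inr j))) := by
      funext s
      cases s with
      | inl j => simp [hg]
      | inr j =>
        simp [hg, map_add, map_mul, Complex.conj_ofReal]
        ring
    rw [hfun]
    exact h _
  have hcomp : bind₁ g' (bind₁ g R) = R := by
    apply MvPolynomial.funext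
    intro x
    rw [eval_bind₁', eval_bind₁']
    have hx : (fun s => eval (fun t => eval x (g' t)) (g s)) = x := by
      funext s
      cases s with
      | inl j =>
        simp [hg, hg']
        linear_combination ((x (Sum.inr j) - x (Sum.inl j))/2) * Complex.I_mul_I
      | inr j =>
        simp [hg, hg']
        linear_combination ((x (Sum.inl j) - x (Sum.inr j))/2) * Complex.I_mul_I
    rw [hx]
  rw [← hcomp, hS, map_zero]

lemma conj_eval {σ : Type*} (x : σ → ℂ) (p : MvPolynomial σ ℂ) :
    (starRingEnd ℂ) (eval x p) =
      eval (fun i => (starRingEnd ℂ) (x i)) (MvPolynomial.map (starRingEnd ℂ) p) := by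
  rw [eval_map, ← eval₂_id (g := x) p, eval₂_comp_left (starRingEnd ℂ)]
  simp [RingHom.comp_id, Function.comp_def]

set_option synthInstance.maxHeartbeats 1000000 in
lemma span_le_aux {n : ℕ} {ι κ : Type*} [Fintype ι] [Fintype κ]
    (A : ι → MvPolynomial (Fin n) ℂ) (B : κ → MvPolynomial (Fin n) ℂ)
    (hv : ∀ w : Fin n → ℂ,
      ∑ a, (starRingEnd ℂ) (eval w (A a)) • A a = ∑ b, (starRingEnd ℂ) (eval w (B b)) • B b) :
    Submodule.span ℂ (Set.range A) ≤ Submodule.span ℂ (Set.range B) := by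
  classical
  set SB := Submodule.span ℂ (Set.range B) with hSB
  rw [Submodule.span_le]
  rintro _ ⟨a₀, rfl⟩
  show A a₀ ∈ SB
  rw [← Submodule.Quotient.mk_eq_zero SB]
  rw [← Module.forall_dual_apply_eq_zero_iff ℂ]
  intro ψ
  set φ : MvPolynomial (Fin n) ℂ →ₗ[ℂ] ℂ := ψ.comp SB.mkQ with hφ
  have hφB : ∀ b, φ (B b) = 0 := by
    intro b
    have hb : SB.mkQ (B b) = 0 := by
      rw [Submodule.mkQ_apply, Submodule.Quotient.mk_eq_zero]
      exact Submodule.subset_span ⟨b, rfl⟩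
    simp [hφ, hb]
  have hφw : ∀ w : Fin n → ℂ, ∑ a, (starRingEnd ℂ) (eval w (A a)) * φ (A a) = 0 := by
    intro w
    have h1 := congrArg φ (hv w)
    rw [map_sum, map_sum] at h1
    simp only [map_smul, smul_eq_mul, hφB, mul_zero, Finset.sum_const_zero] at h1
    exact h1
  set gp : MvPolynomial (Fin n) ℂ := ∑ a, (starRingEnd ℂ) (φ (A a)) • A a with hgp
  have hg : gp = 0 := by
    apply MvPolynomial.funext
    intro w
    rw [map_zero, hgp, map_sum]
    have h1 := congrArg (starRingEnd ℂ) (hφw w)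
    rw [map_sum, map_zero] at h1
    simp only [map_mul, RingHomCompTriple.comp_apply, RingHom.id_apply] at h1
    rw [← h1]
    apply Finset.sum_congr rfl
    intro a _
    rw [smul_eval, mul_comm]
  have hsum : ∑ a, Complex.normSq (φ (A a)) = 0 := by
    have h2 := congrArg φ hg
    rw [map_sum, map_zero] at h2
    have : ∑ a, ((Complex.normSq (φ (A a)) : ℝ) : ℂ) = 0 := by
      rw [← h2]
      apply Finset.sum_congr rfl
      intro a _
      rw [map_smul, smul_eq_mul, Complex.normSq_eq_conj_mul_self]
    exact_mod_cast this
  have ha : ∀ a, φ (A a) = 0 := by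
    intro a
    have := (Finset.sum_eq_zero_iff_of_nonneg
      (fun i _ => Complex.normSq_nonneg (φ (A i)))).mp hsum a (Finset.mem_univ a)
    exact Complex.normSq_eq_zero.mp this
  exact ha a₀

lemma span_eq_of_sum_normSq_eq {n : ℕ} {ι κ : Type} [Fintype ι] [Fintype κ]
    (A : ι → MvPolynomial (Fin n) ℂ) (B : κ → MvPolynomial (Fin n) ℂ)
    (h : ∀ z : Fin n → ℂ,
      ∑ a, Complex.normSq (eval z (A a)) = ∑ b, Complex.normSq (eval z (B b))) :
    Submodule.span ℂ (Set.range A) = Submodule.span ℂ (Set.range B) := by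
  classical
  set Q : MvPolynomial (Fin n ⊕ Fin n) ℂ :=
    (∑ a, rename Sum.inl (A a) * rename Sum.inr (MvPolynomial.map (starRingEnd ℂ) (A a))) -
    (∑ b, rename Sum.inl (B b) * rename Sum.inr (MvPolynomial.map (starRingEnd ℂ) (B b)))
    with hQ
  have hevalQ : ∀ z u : Fin n → ℂ, eval (Sum.elim z u) Q =
      (∑ a, eval z (A a) *
        (starRingEnd ℂ) (eval (fun i => (starRingEnd ℂ) (u i)) (A a))) -
      (∑ b, eval z (B b) *
        (starRingEnd ℂ) (eval (fun i => (starRingEnd ℂ) (u i)) (B b))) := by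
    intro z u
    rw [hQ, map_sub, map_sum, map_sum]
    congr 1 <;>
    · apply Finset.sum_congr rfl
      intro a _
      rw [map_mul, eval_rename, eval_rename]
      rw [conj_eval (fun i => (starRingEnd ℂ) (u i))]
      simp [Function.comp_def]
  have hQ0 : Q = 0 := by
    apply zero_of_eval_conj_diag
    intro z
    rw [hevalQ, sub_eq_zero]
    have hconv : ∀ {γ : Type} [Fintype γ] (Cc : γ → MvPolynomial (Fin n) ℂ),
        (∑ c, eval z (Cc c) *
            (starRingEnd ℂ) (eval (fun i => (starRingEnd ℂ) ((starRingEnd ℂ) (z i))) (Cc c)))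
          = ((∑ c, Complex.normSq (eval z (Cc c)) : ℝ) : ℂ) := by
      intro γ _ Cc
      push_cast
      apply Finset.sum_congr rfl
      intro c _
      simp [Complex.conj_conj, Complex.mul_conj]
    rw [hconv A, hconv B, h z]
  have hzw : ∀ z w : Fin n → ℂ,
      ∑ a, eval z (A a) * (starRingEnd ℂ) (eval w (A a)) =
      ∑ b, eval z (B b) * (starRingEnd ℂ) (eval w (B b)) := by
    intro z w
    have h2 := hevalQ z (fun i => (starRingEnd ℂ) (w i))
    rw [hQ0, map_zero] at h2
    have h3 := sub_eq_zero.mp h2.symm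
    simpa using h3
  have hv : ∀ w : Fin n → ℂ,
      ∑ a, (starRingEnd ℂ) (eval w (A a)) • A a = ∑ b, (starRingEnd ℂ) (eval w (B b)) • B b := by
    intro w
    apply MvPolynomial.funext
    intro z
    rw [map_sum, map_sum]
    simp only [smul_eval]
    calc ∑ a, (starRingEnd ℂ) (eval w (A a)) * eval z (A a)
        = ∑ a, eval z (A a) * (starRingEnd ℂ) (eval w (A a)) := by
          exact Finset.sum_congr rfl fun a _ => mul_comm _ _
      _ = ∑ b, eval z (B b) * (starRingEnd ℂ) (eval w (B b)) := hzw z w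
      _ = _ := Finset.sum_congr rfl fun b _ => mul_comm _ _
  exact le_antisymm (span_le_aux A B hv) (span_le_aux B A fun w => (hv w).symm)

/-- Let `F`, `G`, `P` be polynomial mappings on `ℂⁿ` with
`‖P(z)‖² = (‖F(z)‖² − ‖G(z)‖²)·‖z‖²` for all `z ∈ ℂⁿ`.  Then `V_P + V_{G⊗z} = V_{F⊗z}`;
in particular every product `G^k(z)·zⁱ` lies in the complex span of the products
`F^j(z)·zⁱ`. -/
theorem span_add_eq_of_sos_identity {n pF pG pP : ℕ}
    (F : Fin pF → MvPolynomial (Fin n) ℂ) (G : Fin pG → MvPolynomial (Fin n) ℂ)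
    (P : Fin pP → MvPolynomial (Fin n) ℂ)
    (h : ∀ z : Fin n → ℂ,
      ∑ k, Complex.normSq (MvPolynomial.eval z (P k)) =
        ((∑ j, Complex.normSq (MvPolynomial.eval z (F j))) -
            ∑ k, Complex.normSq (MvPolynomial.eval z (G k))) *
          ∑ i, Complex.normSq (z i)) :
    Submodule.span ℂ (Set.range P) ⊔
        Submodule.span ℂ
          (Set.range fun ki : Fin pG × Fin n => G ki.1 * MvPolynomial.X ki.2) =
      Submodule.span ℂ
        (Set.range fun ji : Fin pF × Fin n => F ji.1 * MvPolynomial.X ji.2) ∧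
    ∀ (k : Fin pG) (i : Fin n),
      G k * MvPolynomial.X i ∈
        Submodule.span ℂ
          (Set.range fun ji : Fin pF × Fin n => F ji.1 * MvPolynomial.X ji.2) := by
  classical
  set A : Fin pP ⊕ Fin pG × Fin n → MvPolynomial (Fin n) ℂ :=
    Sum.elim P (fun ki => G ki.1 * X ki.2) with hA
  set B : Fin pF × Fin n → MvPolynomial (Fin n) ℂ := fun ji => F ji.1 * X ji.2 with hB
  have prodeq : ∀ {m : ℕ} (H : Fin m → MvPolynomial (Fin n) ℂ) (z : Fin n → ℂ),
      ∑ ki : Fin m × Fin n, Complex.normSq (eval z (H ki.1 * X ki.2)) =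
        (∑ k, Complex.normSq (eval z (H k))) * ∑ i, Complex.normSq (z i) := by
    intro m H z
    rw [Finset.sum_mul_sum, ← Finset.sum_product']
    apply Finset.sum_congr rfl
    intro ki _
    simp [Complex.normSq_mul]
  have h' : ∀ z : Fin n → ℂ,
      ∑ a, Complex.normSq (eval z (A a)) = ∑ b, Complex.normSq (eval z (B b)) := by
    intro z
    rw [Fintype.sum_sum_type]
    simp only [hA, hB, Sum.elim_inl, Sum.elim_inr]
    rw [prodeq G z, prodeq F z, h z]
    ring
  have hspan := span_eq_of_sum_normSq_eq A B h'
  rw [hA, Set.Sum.elim_range, Submodule.span_union] at hspan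
  refine ⟨hspan, fun k i => ?_⟩
  rw [← hspan]
  exact le_sup_right (α := Submodule ℂ (MvPolynomial (Fin n) ℂ))
    (Submodule.subset_span ⟨(k, i), rfl⟩)
end
end

section
/- Let F, G, P be polynomial mappings in z = (z¹, …, zⁿ) ∈ ℂⁿ such that ‖P(z)‖² = (‖F(z)‖² − ‖G(z)‖²)·‖z‖² for all z ∈ ℂⁿ. Then for all but finitely many real t in [0, 1], every polynomial mapping Q in z satisfying ‖Q(z)‖² = (‖F(z)‖² − t·‖G(z)‖²)·‖z‖² for all z ∈ ℂⁿ has linear rank equal to dim_ℂ V_{F⊗z}. -/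
open scoped BigOperators

noncomputable section

namespace SosRankAux

open MvPolynomial Complex


open MvPolynomial Complex

variable {σ : Type*}

/-- Coefficientwise application of a map `ℂ → ℝ` sending `0` to `0`. -/
def coeffMap (f : ℂ → ℝ) (q : MvPolynomial σ ℂ) : MvPolynomial σ ℝ :=
  ∑ α ∈ q.support, monomial α (f (q.coeff α))

lemma coeff_coeffMap (f : ℂ → ℝ) (hf : f 0 = 0) (q : MvPolynomial σ ℂ) (α : σ →₀ ℕ) :
    (coeffMap f q).coeff α = f (q.coeff α) := by
  classical
  rw [coeffMap, coeff_sum]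
  simp only [coeff_monomial]
  rw [Finset.sum_ite_eq' q.support α (fun β => f (q.coeff β))]
  split_ifs with hα
  · rfl
  · rw [MvPolynomial.notMem_support_iff.mp hα, hf]

lemma decomp (q : MvPolynomial σ ℂ) :
    q = map Complex.ofRealHom (coeffMap Complex.re q)
        + C Complex.I * map Complex.ofRealHom (coeffMap Complex.im q) := by
  apply MvPolynomial.ext
  intro α
  simp only [coeff_add, coeff_map, coeff_C_mul,
    coeff_coeffMap Complex.re (by simp) q α, coeff_coeffMap Complex.im (by simp) q α]
  simp [Complex.ext_iff]

lemma eval_real_map (p : MvPolynomial σ ℝ) (x : σ → ℝ) :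
    eval (fun i => (x i : ℂ)) (map Complex.ofRealHom p) = ((eval x p : ℝ) : ℂ) := by
  rw [eval_map]
  have h := eval₂_comp_left Complex.ofRealHom (RingHom.id ℝ) x p
  rw [eval₂_id] at h
  exact h.symm

/-- A complex polynomial vanishing at all real points is zero. -/
lemma eq_zero_of_eval_real_eq_zero (q : MvPolynomial σ ℂ)
    (h : ∀ x : σ → ℝ, eval (fun i => (x i : ℂ)) q = 0) : q = 0 := by
  have hre : coeffMap Complex.re q = 0 := by
    apply MvPolynomial.funext
    intro x
    have := h x
    rw [decomp q, map_add, eval_real_map, map_mul, eval_C, eval_real_map] at this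
    have h2 := congrArg Complex.re this
    simpa using h2
  have him : coeffMap Complex.im q = 0 := by
    apply MvPolynomial.funext
    intro x
    have := h x
    rw [decomp q, map_add, eval_real_map, map_mul, eval_C, eval_real_map] at this
    have h2 := congrArg Complex.im this
    simpa using h2
  rw [decomp q, hre, him]
  simp


open MvPolynomial Complex

variable {σ : Type*}


lemma eval_bind₁' (g : σ → ℂ) {τ : Type*} (f : τ → MvPolynomial σ ℂ)
    (p : MvPolynomial τ ℂ) : eval g (bind₁ f p) = eval (fun i => eval g (f i)) p :=
  eval₂Hom_bind₁ _ _ _ _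

/-- The substitution variables. -/
def fsub : σ ⊕ σ → MvPolynomial (σ ⊕ σ) ℂ :=
  Sum.elim (fun i => X (Sum.inl i) + C Complex.I * X (Sum.inr i))
    (fun i => X (Sum.inl i) - C Complex.I * X (Sum.inr i))

def gsub : σ ⊕ σ → MvPolynomial (σ ⊕ σ) ℂ :=
  Sum.elim (fun i => C (1/2 : ℂ) * (X (Sum.inl i) + X (Sum.inr i)))
    (fun i => C (Complex.I/2) * (X (Sum.inr i) - X (Sum.inl i)))

lemma gsub_fsub (j : σ ⊕ σ) : bind₁ (gsub (σ := σ)) (fsub j) = X j := by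
  have hI : (Complex.I) * (Complex.I/2) = -(1/2 : ℂ) := by
    rw [mul_div_assoc', Complex.I_mul_I]
    norm_num
  cases j with
  | inl i =>
      simp only [fsub, gsub, Sum.elim_inl, Sum.elim_inr, map_add, map_mul, map_sub,
        bind₁_X_right, bind₁_C_right]
      rw [show C Complex.I * (C (Complex.I/2) * (X (Sum.inr i) - X (Sum.inl i)))
          = C (Complex.I * (Complex.I/2)) * (X (Sum.inr i) - X (Sum.inl i)) by
            rw [C_mul]; ring]
      rw [hI]
      rw [show (C (-(1/2:ℂ)) : MvPolynomial (σ ⊕ σ) ℂ) = -C (1/2:ℂ) by simp]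
      have h2 : (C (1/2:ℂ) : MvPolynomial (σ ⊕ σ) ℂ) * 2 = 1 := by
        rw [show (2 : MvPolynomial (σ ⊕ σ) ℂ) = C (2:ℂ) from (map_ofNat C 2).symm, ← C_mul]; norm_num
      linear_combination (X (Sum.inl i) : MvPolynomial (σ ⊕ σ) ℂ) * h2
  | inr i =>
      simp only [fsub, gsub, Sum.elim_inl, Sum.elim_inr, map_add, map_mul, map_sub,
        bind₁_X_right, bind₁_C_right]
      rw [show C Complex.I * (C (Complex.I/2) * (X (Sum.inr i) - X (Sum.inl i)))
          = C (Complex.I * (Complex.I/2)) * (X (Sum.inr i) - X (Sum.inl i)) by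
            rw [C_mul]; ring]
      rw [hI]
      rw [show (C (-(1/2:ℂ)) : MvPolynomial (σ ⊕ σ) ℂ) = -C (1/2:ℂ) by simp]
      have h2 : (C (1/2:ℂ) : MvPolynomial (σ ⊕ σ) ℂ) * 2 = 1 := by
        rw [show (2 : MvPolynomial (σ ⊕ σ) ℂ) = C (2:ℂ) from (map_ofNat C 2).symm, ← C_mul]; norm_num
      linear_combination (X (Sum.inr i) : MvPolynomial (σ ⊕ σ) ℂ) * h2

/-- The diagonal lemma: a polynomial in `(z, w)` vanishing on `w = conj z` is zero. -/
lemma eq_zero_of_eval_diag_eq_zero (p : MvPolynomial (σ ⊕ σ) ℂ)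
    (h : ∀ z : σ → ℂ, eval (Sum.elim z (fun i => (starRingEnd ℂ) (z i))) p = 0) : p = 0 := by
  have hq : bind₁ (fsub (σ := σ)) p = 0 := by
    apply eq_zero_of_eval_real_eq_zero
    intro x
    rw [eval_bind₁']
    have hfun : (fun j => eval (fun i => ((x i : ℂ))) (fsub (σ := σ) j))
        = Sum.elim (fun i => (x (Sum.inl i) : ℂ) + Complex.I * (x (Sum.inr i) : ℂ))
            (fun i => (starRingEnd ℂ) ((x (Sum.inl i) : ℂ) + Complex.I * (x (Sum.inr i) : ℂ))) := by
      funext j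
      cases j with
      | inl i => simp [fsub]
      | inr i =>
          simp [fsub, map_add, map_mul, Complex.conj_ofReal, Complex.conj_I]
          ring
    rw [hfun]
    exact h _
  have := congrArg (bind₁ (gsub (σ := σ))) hq
  rw [bind₁_bind₁] at this
  simp only [gsub_fsub] at this
  rwa [bind₁_X_left, map_zero, AlgHom.id_apply] at this


open MvPolynomial Complex

/-- The span of `Q` is the span of the "Gram-extracted" combinations. -/
lemma span_eq_span_gram {n : ℕ} {ι : Type*} [Fintype ι] (Q : ι → MvPolynomial (Fin n) ℂ) :
    Submodule.span ℂ (Set.range Q) =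
      Submodule.span ℂ (Set.range fun β : (Fin n →₀ ℕ) =>
        ∑ k, (starRingEnd ℂ) (MvPolynomial.coeff β (Q k)) • Q k) := by
  classical
  let L : EuclideanSpace ℂ ι →ₗ[ℂ] MvPolynomial (Fin n) ℂ :=
    { toFun := fun v => ∑ k, v k • Q k
      map_add' := by
        intro a b
        simp [add_smul, Finset.sum_add_distrib]
      map_smul' := by
        intro c a
        simp [smul_smul, Finset.smul_sum] }
  have hLapp : ∀ v : EuclideanSpace ℂ ι, L v = ∑ k, v k • Q k := fun _ => rfl
  have hrange : LinearMap.range L = Submodule.span ℂ (Set.range Q) := by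
    apply le_antisymm
    · rintro _ ⟨v, rfl⟩
      exact Submodule.sum_mem _ fun k _ =>
        Submodule.smul_mem _ _ (Submodule.subset_span ⟨k, rfl⟩)
    · rw [Submodule.span_le]
      rintro _ ⟨k, rfl⟩
      refine ⟨EuclideanSpace.single k 1, ?_⟩
      rw [hLapp]
      simp [EuclideanSpace.single_apply, ite_smul]
  have hLcoeff : ∀ (v : EuclideanSpace ℂ ι) (β : Fin n →₀ ℕ),
      MvPolynomial.coeff β (L v) = ∑ k, v k * MvPolynomial.coeff β (Q k) := by
    intro v β
    rw [hLapp, coeff_sum]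
    simp [coeff_smul, smul_eq_mul]
  set c : (Fin n →₀ ℕ) → EuclideanSpace ℂ ι :=
    fun β => WithLp.toLp 2 (fun k => (starRingEnd ℂ) (MvPolynomial.coeff β (Q k))) with hc
  set V : Submodule ℂ (EuclideanSpace ℂ ι) := Submodule.span ℂ (Set.range c) with hV
  have hinner : ∀ (β : Fin n →₀ ℕ) (v : EuclideanSpace ℂ ι),
      (inner ℂ (c β) v : ℂ) = ∑ k, MvPolynomial.coeff β (Q k) * v k := by
    intro β v
    rw [PiLp.inner_apply]
    simp [hc, RCLike.inner_apply]
    exact Finset.sum_congr rfl fun k _ => mul_comm _ _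
  have hker : LinearMap.ker L = Vᗮ := by
    ext v
    simp only [LinearMap.mem_ker, Submodule.mem_orthogonal]
    constructor
    · intro hv u hu
      induction hu using Submodule.span_induction with
      | mem u hu =>
          obtain ⟨β, rfl⟩ := hu
          rw [hinner]
          have h0 : MvPolynomial.coeff β (L v) = 0 := by rw [hv]; simp
          rw [hLcoeff] at h0
          rw [show (∑ k, MvPolynomial.coeff β (Q k) * v k)
              = ∑ k, v k * MvPolynomial.coeff β (Q k) from
            Finset.sum_congr rfl (fun k _ => mul_comm _ _)]
          exact h0
      | zero => simp
      | add u w _ _ hu hw => rw [inner_add_left, hu, hw, add_zero]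
      | smul a u _ hu => rw [inner_smul_left, hu, mul_zero]
    · intro hv
      apply MvPolynomial.ext
      intro β
      have := hv (c β) (Submodule.subset_span ⟨β, rfl⟩)
      rw [hinner] at this
      rw [hLcoeff]
      simpa [mul_comm] using this
  have hVsup : V ⊔ Vᗮ = ⊤ := Submodule.sup_orthogonal_of_hasOrthogonalProjection
  have hmapker : Submodule.map L Vᗮ = ⊥ := by
    rw [← hker]
    apply le_bot_iff.mp
    rintro _ ⟨v, hv, rfl⟩
    simpa using hv
  calc Submodule.span ℂ (Set.range Q) = LinearMap.range L := hrange.symm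
    _ = Submodule.map L ⊤ := (Submodule.map_top L).symm
    _ = Submodule.map L (V ⊔ Vᗮ) := by rw [hVsup]
    _ = Submodule.map L V ⊔ Submodule.map L Vᗮ := Submodule.map_sup _ _ _
    _ = Submodule.map L V := by rw [hmapker, sup_bot_eq]
    _ = Submodule.span ℂ (L '' Set.range c) := by rw [hV, Submodule.map_span]
    _ = Submodule.span ℂ (Set.range (L ∘ c)) := by rw [Set.range_comp]
    _ = _ := rfl


open MvPolynomial Complex

variable {σ : Type*}



/-- The "bihomogeneous" Gram polynomial of a tuple. -/
def gram {n : ℕ} {ι : Type*} [Fintype ι] (Q : ι → MvPolynomial (Fin n) ℂ) :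
    MvPolynomial (Fin n ⊕ Fin n) ℂ :=
  ∑ k, rename Sum.inl (Q k) * rename Sum.inr (map (starRingEnd ℂ) (Q k))

lemma eval_conj (z : Fin n → ℂ) (a : MvPolynomial (Fin n) ℂ) :
    eval (fun i => (starRingEnd ℂ) (z i)) (map (starRingEnd ℂ) a)
      = (starRingEnd ℂ) (eval z a) := by
  rw [eval_map]
  have h := eval₂_comp_left ((starRingEnd ℂ) : ℂ →+* ℂ) (RingHom.id ℂ) z a
  rw [eval₂_id] at h
  exact h.symm

lemma eval_diag_gram {n : ℕ} {ι : Type*} [Fintype ι] (Q : ι → MvPolynomial (Fin n) ℂ)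
    (z : Fin n → ℂ) :
    eval (Sum.elim z (fun i => (starRingEnd ℂ) (z i))) (gram Q)
      = ((∑ k, Complex.normSq (eval z (Q k)) : ℝ) : ℂ) := by
  rw [gram, map_sum]
  push_cast
  apply Finset.sum_congr rfl
  intro k _
  rw [map_mul, eval_rename, eval_rename]
  rw [show (Sum.elim z (fun i => (starRingEnd ℂ) (z i))) ∘ Sum.inl = z from rfl]
  rw [show (Sum.elim z (fun i => (starRingEnd ℂ) (z i))) ∘ Sum.inr
      = (fun i => (starRingEnd ℂ) (z i)) from rfl]
  rw [eval_conj, Complex.mul_conj]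

lemma sumToIter_rename_inr {n : ℕ} (a : MvPolynomial (Fin n) ℂ) :
    sumToIter ℂ (Fin n) (Fin n) (rename Sum.inr a) = C a := by
  have : (sumToIter ℂ (Fin n) (Fin n)).comp (rename (Sum.inr : Fin n → Fin n ⊕ Fin n)).toRingHom
      = (C : MvPolynomial (Fin n) ℂ →+* MvPolynomial (Fin n) (MvPolynomial (Fin n) ℂ)) := by
    apply ringHom_ext
    · intro r
      simp [sumToIter_C]
    · intro i
      simp [sumToIter_Xr]
  exact RingHom.congr_fun this a

lemma sumToIter_rename_inl {n : ℕ} (a : MvPolynomial (Fin n) ℂ) :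
    sumToIter ℂ (Fin n) (Fin n) (rename Sum.inl a)
      = map (C : ℂ →+* MvPolynomial (Fin n) ℂ) a := by
  have : (sumToIter ℂ (Fin n) (Fin n)).comp (rename (Sum.inl : Fin n → Fin n ⊕ Fin n)).toRingHom
      = (map (C : ℂ →+* MvPolynomial (Fin n) ℂ)).comp
          (RingHom.id (MvPolynomial (Fin n) ℂ)) := by
    apply ringHom_ext
    · intro r
      simp [sumToIter_C]
    · intro i
      simp [sumToIter_Xl]
  simpa using RingHom.congr_fun this a

lemma gram_extract {n : ℕ} {ι : Type*} [Fintype ι] (Q : ι → MvPolynomial (Fin n) ℂ)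
    (β : Fin n →₀ ℕ) :
    MvPolynomial.coeff β (sumToIter ℂ (Fin n) (Fin n) (rename Sum.swap (gram Q)))
      = ∑ k, (starRingEnd ℂ) (MvPolynomial.coeff β (Q k)) • Q k := by
  rw [gram, map_sum, map_sum, coeff_sum]
  apply Finset.sum_congr rfl
  intro k _
  rw [map_mul, rename_rename, rename_rename]
  rw [show Sum.swap ∘ (Sum.inl : Fin n → Fin n ⊕ Fin n) = Sum.inr from funext fun i => rfl]
  rw [show Sum.swap ∘ (Sum.inr : Fin n → Fin n ⊕ Fin n) = Sum.inl from funext fun i => rfl]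
  rw [map_mul, sumToIter_rename_inr, sumToIter_rename_inl]
  rw [coeff_C_mul, coeff_map, coeff_map, smul_eq_C_mul]
  ring

/-- Tuples with the same pointwise squared norms span the same subspace. -/
lemma span_eq_of_normSq {n : ℕ} {ι κ : Type*} [Fintype ι] [Fintype κ]
    (Q : ι → MvPolynomial (Fin n) ℂ) (R : κ → MvPolynomial (Fin n) ℂ)
    (h : ∀ z : Fin n → ℂ,
      ∑ k, Complex.normSq (eval z (Q k)) = ∑ j, Complex.normSq (eval z (R j))) :
    Submodule.span ℂ (Set.range Q) = Submodule.span ℂ (Set.range R) := by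
  have hgram : gram Q = gram R := by
    have hz : gram Q - gram R = 0 := by
      apply eq_zero_of_eval_diag_eq_zero
      intro z
      rw [map_sub, eval_diag_gram, eval_diag_gram, h z, sub_self]
    exact sub_eq_zero.mp hz
  rw [span_eq_span_gram Q, span_eq_span_gram R]
  have hfun : (fun β : Fin n →₀ ℕ =>
        ∑ k, (starRingEnd ℂ) (MvPolynomial.coeff β (Q k)) • Q k)
      = (fun β : Fin n →₀ ℕ =>
        ∑ j, (starRingEnd ℂ) (MvPolynomial.coeff β (R j)) • R j) := by
    funext β
    rw [← gram_extract Q β, ← gram_extract R β, hgram]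
  rw [hfun]


open MvPolynomial Complex



end SosRankAux

open MvPolynomial Complex in
/-- Let `F`, `G`, `P` be polynomial mappings on `ℂⁿ` with
`‖P(z)‖² = (‖F(z)‖² − ‖G(z)‖²)·‖z‖²` for all `z ∈ ℂⁿ`.  Then for all but finitely many real
`t ∈ [0,1]`, every polynomial mapping `Q` with `‖Q(z)‖² = (‖F(z)‖² − t·‖G(z)‖²)·‖z‖²` for all
`z ∈ ℂⁿ` has linear rank equal to `dim_ℂ V_{F⊗z}`. -/
theorem generic_rank_of_sos_family {n pF pG pP : ℕ}
    (F : Fin pF → MvPolynomial (Fin n) ℂ) (G : Fin pG → MvPolynomial (Fin n) ℂ)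
    (P : Fin pP → MvPolynomial (Fin n) ℂ)
    (h : ∀ z : Fin n → ℂ,
      ∑ k, Complex.normSq (MvPolynomial.eval z (P k)) =
        ((∑ j, Complex.normSq (MvPolynomial.eval z (F j))) -
            ∑ k, Complex.normSq (MvPolynomial.eval z (G k))) *
          ∑ i, Complex.normSq (z i)) :
    ∃ S : Set ℝ, S.Finite ∧
      ∀ t ∈ Set.Icc (0 : ℝ) 1, t ∉ S →
        ∀ (m : ℕ) (Q : Fin m → MvPolynomial (Fin n) ℂ),
          (∀ z : Fin n → ℂ,
            ∑ k, Complex.normSq (MvPolynomial.eval z (Q k)) =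
              ((∑ j, Complex.normSq (MvPolynomial.eval z (F j))) -
                  t * ∑ k, Complex.normSq (MvPolynomial.eval z (G k))) *
                ∑ i, Complex.normSq (z i)) →
          Module.finrank ℂ (Submodule.span ℂ (Set.range Q)) =
            Module.finrank ℂ
              (Submodule.span ℂ
                (Set.range fun ji : Fin pF × Fin n => F ji.1 * MvPolynomial.X ji.2)) := by

  classical
  set FX : Fin pF × Fin n → MvPolynomial (Fin n) ℂ :=
    fun ji => F ji.1 * MvPolynomial.X ji.2 with hFX
  set GX : Fin pG × Fin n → MvPolynomial (Fin n) ℂ :=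
    fun ji => G ji.1 * MvPolynomial.X ji.2 with hGX
  have hevalFX : ∀ (z : Fin n → ℂ) (ji : Fin pF × Fin n),
      Complex.normSq (MvPolynomial.eval z (FX ji))
        = Complex.normSq (MvPolynomial.eval z (F ji.1)) * Complex.normSq (z ji.2) := by
    intro z ji
    simp [hFX, Complex.normSq_mul]
  have hevalGX : ∀ (z : Fin n → ℂ) (ji : Fin pG × Fin n),
      Complex.normSq (MvPolynomial.eval z (GX ji))
        = Complex.normSq (MvPolynomial.eval z (G ji.1)) * Complex.normSq (z ji.2) := by
    intro z ji
    simp [hGX, Complex.normSq_mul]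
  have hsumFX : ∀ z : Fin n → ℂ,
      ∑ ji : Fin pF × Fin n, Complex.normSq (MvPolynomial.eval z (FX ji))
        = (∑ j, Complex.normSq (MvPolynomial.eval z (F j))) * ∑ i, Complex.normSq (z i) := by
    intro z
    rw [Fintype.sum_prod_type]
    rw [Finset.sum_mul_sum]
    exact Finset.sum_congr rfl fun j _ => Finset.sum_congr rfl fun i _ => hevalFX z (j, i)
  have hsumGX : ∀ z : Fin n → ℂ,
      ∑ ji : Fin pG × Fin n, Complex.normSq (MvPolynomial.eval z (GX ji))
        = (∑ j, Complex.normSq (MvPolynomial.eval z (G j))) * ∑ i, Complex.normSq (z i) := by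
    intro z
    rw [Fintype.sum_prod_type]
    rw [Finset.sum_mul_sum]
    exact Finset.sum_congr rfl fun j _ => Finset.sum_congr rfl fun i _ => hevalGX z (j, i)
  -- span P ≤ span FX
  have hspan1 : Submodule.span ℂ (Set.range (Sum.elim P GX))
      = Submodule.span ℂ (Set.range FX) := by
    apply SosRankAux.span_eq_of_normSq
    intro z
    rw [Fintype.sum_sum_type]
    simp only [Sum.elim_inl, Sum.elim_inr]
    rw [hsumGX z, hsumFX z, h z]
    ring
  have hP_le : Submodule.span ℂ (Set.range P) ≤ Submodule.span ℂ (Set.range FX) := by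
    rw [← hspan1]
    apply Submodule.span_mono
    rintro _ ⟨k, rfl⟩
    exact ⟨Sum.inl k, rfl⟩
  refine ⟨{1}, Set.finite_singleton 1, ?_⟩
  intro t ht ht1 m Q hQ
  have ht0 : 0 ≤ t := ht.1
  have htlt : t < 1 := lt_of_le_of_ne ht.2 (fun hh => ht1 (by simp [hh]))
  set s : ℝ := Real.sqrt (1 - t) with hs
  set u : ℝ := Real.sqrt t with hu
  have hs2 : s * s = 1 - t := Real.mul_self_sqrt (by linarith)
  have hu2 : u * u = t := Real.mul_self_sqrt ht0
  have hsne : (s : ℂ) ≠ 0 := by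
    simp only [ne_eq, Complex.ofReal_eq_zero]
    intro hh
    rw [hh] at hs2
    linarith [hs2]
  set R : (Fin pF × Fin n) ⊕ Fin pP → MvPolynomial (Fin n) ℂ :=
    Sum.elim (fun ji => MvPolynomial.C (s : ℂ) * FX ji)
      (fun k => MvPolynomial.C (u : ℂ) * P k) with hR
  have hQR : Submodule.span ℂ (Set.range Q) = Submodule.span ℂ (Set.range R) := by
    apply SosRankAux.span_eq_of_normSq
    intro z
    rw [Fintype.sum_sum_type]
    simp only [hR, Sum.elim_inl, Sum.elim_inr, map_mul, MvPolynomial.eval_C,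
      Complex.normSq_mul, Complex.normSq_ofReal]
    rw [← Finset.mul_sum, ← Finset.mul_sum, hsumFX z, hQ z, hs2, hu2, h z]
    ring
  have hRFX : Submodule.span ℂ (Set.range R) = Submodule.span ℂ (Set.range FX) := by
    apply le_antisymm
    · rw [Submodule.span_le]
      rintro _ ⟨x, rfl⟩
      cases x with
      | inl ji =>
          simp only [hR, Sum.elim_inl, ← MvPolynomial.smul_eq_C_mul]
          exact Submodule.smul_mem _ _ (Submodule.subset_span ⟨ji, rfl⟩)
      | inr k =>
          simp only [hR, Sum.elim_inr, ← MvPolynomial.smul_eq_C_mul]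
          exact Submodule.smul_mem _ _ (hP_le (Submodule.subset_span ⟨k, rfl⟩))
    · rw [Submodule.span_le]
      rintro _ ⟨ji, rfl⟩
      have hji : FX ji = ((s : ℂ))⁻¹ • R (Sum.inl ji) := by
        simp only [hR, Sum.elim_inl, ← MvPolynomial.smul_eq_C_mul]
        rw [inv_smul_smul₀ hsne]
      rw [hji]
      exact Submodule.smul_mem _ _ (Submodule.subset_span ⟨Sum.inl ji, rfl⟩)
  rw [hQR, hRFX]
end
end
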